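/- (NFE-1 learns composition rules.) Let n ∈ ℕ and r₁_μ, r₁_σ, r₂_μ, r₂_σ, r₃_μ, r₃_σ ∈ ℝⁿ satisfy r₃_σ = r₁_σ ⊙ r₂_σ and r₃_μ = r₂_σ ⊙ r₁_μ + r₂_μ. Then for all h_μ, h_σ, t̃_μ, t̃_σ, t_μ, t_σ ∈ ℝⁿ: if r₁_σ ⊙ h_μ + r₁_μ = t̃_μ, |r₁_σ ⊙ h_σ| = |t̃_σ|, r₂_σ ⊙ t̃_μ + r₂_μ = t_μ and |r₂_σ ⊙ t̃_σ| = |t_σ|, then r₃_σ ⊙ h_μ + r₃_μ = t_μ and |r₃_σ ⊙ h_σ| = |t_σ|. -/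
import Mathlib

open MeasureTheory ProbabilityTheory
open scoped ENNReal NNReal

/-- NFE-1 learns composition rules: if r₃_σ = r₁_σ ⊙ r₂_σ and r₃_μ = r₂_σ ⊙ r₁_μ + r₂_μ,
then whenever (h, r₁, t~) and (t~, r₂, t) attain the maximal score, so does (h, r₃, t). -/
theorem nfe1_composition (n : ℕ) (r₁μ r₁σ r₂μ r₂σ r₃μ r₃σ : Fin n → ℝ)
    (h₁ : r₃σ = r₁σ * r₂σ) (h₂ : r₃μ = r₂σ * r₁μ + r₂μ) :
    ∀ hμ hσ t'μ t'σ tμ tσ : Fin n → ℝ,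
      r₁σ * hμ + r₁μ = t'μ → |r₁σ * hσ| = |t'σ| →
      r₂σ * t'μ + r₂μ = tμ → |r₂σ * t'σ| = |tσ| →
      r₃σ * hμ + r₃μ = tμ ∧ |r₃σ * hσ| = |tσ| := by
  intro hμ hσ t'μ t'σ tμ tσ e1 e2 e3 e4
  subst h₁ h₂
  constructor
  · rw [← e3, ← e1]; ring
  · rw [← e4]
    funext i
    have h2 := congrFun e2 i
    simp only [Pi.abs_apply, Pi.mul_apply, abs_mul] at *
    rw [← h2]; ring
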